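/- Assume B⁻ ∩ N = {1}, v̇⁻¹B⁻v̇ ∩ N ⊆ v̇⁻¹N⁻v̇, N = N(v)·N'(v) with N(v) ∩ N'(v) = {1}, N = N(w⁻¹)·N'(w⁻¹) with N(w⁻¹) ∩ N'(w⁻¹) = {1}, and B⁻ẇB⁻ ⊆ B⁻ẇ(N⁻ ∩ ẇ⁻¹Nẇ). Consider the ring of doubly invariant ℂ-valued functions on O_{v,w}, namely {f : O_{v,w} → ℂ : f(n₁yn₂) = f(y) for all n₁ ∈ N(v), y ∈ O_{v,w}, n₂ ∈ N'(w)}, with pointwise addition and multiplication. Then the restriction map f ↦ f|_{N_{v,w}} is a ring isomorphism from this ring of invariant functions onto the ring of all ℂ-valued functions on N_{v,w}. -/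
import Mathlib


/-- `N(v) = N ∩ v⁻¹ N⁻ v`, i.e. the elements `x ∈ N` with `v * x * v⁻¹ ∈ N⁻`. -/
def NvSet {G : Type*} [Group G] (N Nm : Subgroup G) (v : G) : Set G :=
  {x | x ∈ N ∧ v * x * v⁻¹ ∈ Nm}

/-- `N'(v) = N ∩ v⁻¹ N v`, i.e. the elements `x ∈ N` with `v * x * v⁻¹ ∈ N`. -/
def Nv'Set {G : Type*} [Group G] (N : Subgroup G) (v : G) : Set G :=
  {x | x ∈ N ∧ v * x * v⁻¹ ∈ N}

/-- `O_{v,w} = N ∩ v⁻¹ B⁻ N w`. -/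
def OSet {G : Type*} [Group G] (N Bm : Subgroup G) (v w : G) : Set G :=
  {x | x ∈ N ∧ ∃ b ∈ Bm, ∃ n ∈ N, v * x = b * n * w}

/-- `N_{v,w} = N'(v) ∩ v⁻¹ B⁻ w B⁻`. -/
def NvwSet {G : Type*} [Group G] (N Bm : Subgroup G) (v w : G) : Set G :=
  {x | x ∈ Nv'Set N v ∧ ∃ b₁ ∈ Bm, ∃ b₂ ∈ Bm, v * x = b₁ * w * b₂}

/-- `U_{v,w} = N ∩ B⁻ v N w⁻¹`. -/
def USet {G : Type*} [Group G] (N Bm : Subgroup G) (v w : G) : Set G :=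
  {x | x ∈ N ∧ ∃ b ∈ Bm, ∃ n ∈ N, x = b * v * n * w⁻¹}

section Aux
variable {G : Type*} [Group G] {Bm Nm N : Subgroup G} {v w : G}

lemma NvSet_one : (1 : G) ∈ NvSet N Nm v :=
  ⟨N.one_mem, by simpa using Nm.one_mem⟩

lemma Nv'Set_one : (1 : G) ∈ Nv'Set N v :=
  ⟨N.one_mem, by simpa using N.one_mem⟩

lemma NvSet_mul {a b : G} (ha : a ∈ NvSet N Nm v) (hb : b ∈ NvSet N Nm v) :
    a * b ∈ NvSet N Nm v := by
  refine ⟨N.mul_mem ha.1 hb.1, ?_⟩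
  have h : v * (a * b) * v⁻¹ = (v * a * v⁻¹) * (v * b * v⁻¹) := by group
  rw [h]; exact Nm.mul_mem ha.2 hb.2

lemma NvSet_inv {a : G} (ha : a ∈ NvSet N Nm v) : a⁻¹ ∈ NvSet N Nm v := by
  refine ⟨N.inv_mem ha.1, ?_⟩
  have h : v * a⁻¹ * v⁻¹ = (v * a * v⁻¹)⁻¹ := by group
  rw [h]; exact Nm.inv_mem ha.2

lemma Nv'Set_mul {a b : G} (ha : a ∈ Nv'Set N v) (hb : b ∈ Nv'Set N v) :
    a * b ∈ Nv'Set N v := by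
  refine ⟨N.mul_mem ha.1 hb.1, ?_⟩
  have h : v * (a * b) * v⁻¹ = (v * a * v⁻¹) * (v * b * v⁻¹) := by group
  rw [h]; exact N.mul_mem ha.2 hb.2

lemma Nv'Set_inv {a : G} (ha : a ∈ Nv'Set N v) : a⁻¹ ∈ Nv'Set N v := by
  refine ⟨N.inv_mem ha.1, ?_⟩
  have h : v * a⁻¹ * v⁻¹ = (v * a * v⁻¹)⁻¹ := by group
  rw [h]; exact N.inv_mem ha.2

/-- N_{v,w} ⊆ O_{v,w}. -/
lemma Nvw_sub_O
    (hBruhat : {x : G | ∃ b₁ ∈ Bm, ∃ b₂ ∈ Bm, x = b₁ * w * b₂}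
        ⊆ {x : G | ∃ b ∈ Bm, ∃ m, (m ∈ Nm ∧ w * m * w⁻¹ ∈ N) ∧ x = b * w * m}) :
    NvwSet N Bm v w ⊆ OSet N Bm v w := by
  rintro z ⟨⟨hzN, -⟩, b₁, hb₁, b₂, hb₂, hvz⟩
  obtain ⟨b, hb, m, ⟨hmNm, hmN⟩, heq⟩ := hBruhat ⟨b₁, hb₁, b₂, hb₂, hvz⟩
  refine ⟨hzN, b, hb, w * m * w⁻¹, hmN, ?_⟩
  rw [heq]; group

/-- Existence of the decomposition O_{v,w} = N(v) · N_{v,w} · N'(w). -/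
lemma exists_decomp (hNmBm : Nm ≤ Bm)
    (hfactv : ∀ x ∈ N, ∃ a ∈ NvSet N Nm v, ∃ b ∈ Nv'Set N v, x = a * b)
    (hfactw : ∀ x ∈ N, ∃ a ∈ NvSet N Nm w⁻¹, ∃ b ∈ Nv'Set N w⁻¹, x = a * b)
    {y : G} (hy : y ∈ OSet N Bm v w) :
    ∃ a ∈ NvSet N Nm v, ∃ z ∈ NvwSet N Bm v w, ∃ c ∈ Nv'Set N w, y = a * z * c := by
  obtain ⟨hyN, b, hb, n, hn, hvy⟩ := hy
  obtain ⟨m₁, hm₁, m₂, hm₂, hn'⟩ := hfactw n hn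
  set c : G := w⁻¹ * m₂ * w with hc_def
  have hcN : c ∈ N := by
    have := hm₂.2; simpa [hc_def] using this
  have hc : c ∈ Nv'Set N w := by
    refine ⟨hcN, ?_⟩
    have h : w * (w⁻¹ * m₂ * w) * w⁻¹ = m₂ := by group
    rw [hc_def, h]; exact hm₂.1
  have hvu : v * (y * c⁻¹) = b * m₁ * w := by
    have h1 : v * (y * c⁻¹) = (v * y) * (w⁻¹ * m₂⁻¹ * w) := by rw [hc_def]; group
    rw [h1, hvy, hn']; group
  obtain ⟨a, ha, z, hzv', hu'⟩ :=
    hfactv (y * c⁻¹) (N.mul_mem hyN (N.inv_mem hcN))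
  have hvz : v * z = ((v * a * v⁻¹)⁻¹ * b) * w * (w⁻¹ * m₁ * w) := by
    have h1 : v * z = (v * a * v⁻¹)⁻¹ * (v * (a * z)) := by group
    rw [h1, ← hu', hvu]; group
  have hb₂ : w⁻¹ * m₁ * w ∈ Bm := by
    have := hm₁.2; simp only [inv_inv] at this; exact hNmBm this
  refine ⟨a, ha, z, ⟨hzv', (v * a * v⁻¹)⁻¹ * b,
    Bm.mul_mem (Bm.inv_mem (hNmBm ha.2)) hb, w⁻¹ * m₁ * w, hb₂, hvz⟩, c, hc, ?_⟩
  have h2 : y = (y * c⁻¹) * c := by group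
  rw [h2, hu']

/-- Uniqueness of the middle factor. -/
lemma unique_decomp (hNmBm : Nm ≤ Bm)
    (hBN : ∀ x : G, x ∈ Bm → x ∈ N → x = 1)
    (hBruhat : {x : G | ∃ b₁ ∈ Bm, ∃ b₂ ∈ Bm, x = b₁ * w * b₂}
        ⊆ {x : G | ∃ b ∈ Bm, ∃ m, (m ∈ Nm ∧ w * m * w⁻¹ ∈ N) ∧ x = b * w * m})
    {a a' z z' c c' : G}
    (ha : a ∈ NvSet N Nm v) (ha' : a' ∈ NvSet N Nm v)
    (hz : z ∈ NvwSet N Bm v w) (hz' : z' ∈ NvwSet N Bm v w)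
    (hc : c ∈ Nv'Set N w) (hc' : c' ∈ Nv'Set N w)
    (heq : a * z * c = a' * z' * c') : z = z' := by
  obtain ⟨hzv, bz₁, hbz₁, bz₂, hbz₂, hvz0⟩ := hz
  obtain ⟨hzv', bz₁', hbz₁', bz₂', hbz₂', hvz0'⟩ := hz'
  obtain ⟨b, hb, m, ⟨hmNm, hmN⟩, hvz⟩ := hBruhat ⟨bz₁, hbz₁, bz₂, hbz₂, hvz0⟩
  obtain ⟨b', hb', m', ⟨hmNm', hmN'⟩, hvz'⟩ := hBruhat ⟨bz₁', hbz₁', bz₂', hbz₂', hvz0'⟩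
  have hA : a'⁻¹ * a ∈ NvSet N Nm v := NvSet_mul (NvSet_inv ha') ha
  have hAz : a'⁻¹ * a * z = z' * (c' * c⁻¹) := by
    have h1 : a'⁻¹ * (a * z * c) * c⁻¹ = a'⁻¹ * a * z := by group
    have h2 : a'⁻¹ * (a' * z' * c') * c⁻¹ = z' * (c' * c⁻¹) := by group
    rw [← h1, heq, h2]
  have hmain : v * (a'⁻¹ * a) * v⁻¹ * (b * w * m) = b' * w * m' * (c' * c⁻¹) := by
    rw [← hvz, ← hvz']
    have h3 : v * (a'⁻¹ * a) * v⁻¹ * (v * z) = v * (a'⁻¹ * a * z) := by group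
    rw [h3, hAz]; group
  have hβ : b'⁻¹ * (v * (a'⁻¹ * a) * v⁻¹) * b
      = w * m' * (c' * c⁻¹) * m⁻¹ * w⁻¹ := by
    have h2 : b'⁻¹ * (v * (a'⁻¹ * a) * v⁻¹ * (b * w * m)) * (m⁻¹ * w⁻¹)
        = b'⁻¹ * (v * (a'⁻¹ * a) * v⁻¹) * b := by group
    have h3 : b'⁻¹ * (b' * w * m' * (c' * c⁻¹)) * (m⁻¹ * w⁻¹)
        = w * m' * (c' * c⁻¹) * m⁻¹ * w⁻¹ := by group
    rw [← h2, hmain, h3]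
  have hβBm : b'⁻¹ * (v * (a'⁻¹ * a) * v⁻¹) * b ∈ Bm :=
    Bm.mul_mem (Bm.mul_mem (Bm.inv_mem hb') (hNmBm hA.2)) hb
  have hβN : b'⁻¹ * (v * (a'⁻¹ * a) * v⁻¹) * b ∈ N := by
    rw [hβ]
    have h4 : w * m' * (c' * c⁻¹) * m⁻¹ * w⁻¹
        = (w * m' * w⁻¹) * ((w * c' * w⁻¹) * (w * c * w⁻¹)⁻¹) * (w * m * w⁻¹)⁻¹ := by
      group
    rw [h4]
    exact N.mul_mem (N.mul_mem hmN' (N.mul_mem hc'.2 (N.inv_mem hc.2))) (N.inv_mem hmN)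
  have hβone : b'⁻¹ * (v * (a'⁻¹ * a) * v⁻¹) * b = 1 := hBN _ hβBm hβN
  have hC1 : c' * c⁻¹ = m'⁻¹ * m := by
    have h1 : w * m' * (c' * c⁻¹) * m⁻¹ * w⁻¹ = 1 := by rw [← hβ]; exact hβone
    calc c' * c⁻¹ = m'⁻¹ * (w⁻¹ * (w * m' * (c' * c⁻¹) * m⁻¹ * w⁻¹) * w) * m := by group
      _ = m'⁻¹ * m := by rw [h1]; group
  have hCone : c' * c⁻¹ = 1 := by
    refine hBN _ (hNmBm ?_) (N.mul_mem hc'.1 (N.inv_mem hc.1))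
    rw [hC1]; exact Nm.mul_mem (Nm.inv_mem hmNm') hmNm
  have hAz' : a'⁻¹ * a * z = z' := by rw [hAz, hCone, mul_one]
  have hAmemN : v * (a'⁻¹ * a) * v⁻¹ ∈ N := by
    have h5 : v * (a'⁻¹ * a) * v⁻¹ = (v * z' * v⁻¹) * (v * z * v⁻¹)⁻¹ := by
      rw [← hAz']; group
    rw [h5]; exact N.mul_mem hzv'.2 (N.inv_mem hzv.2)
  have hAone : v * (a'⁻¹ * a) * v⁻¹ = 1 := hBN _ (hNmBm hA.2) hAmemN
  have hA1 : a'⁻¹ * a = 1 := by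
    have h6 : a'⁻¹ * a = v⁻¹ * (v * (a'⁻¹ * a) * v⁻¹) * v := by group
    rw [h6, hAone]; group
  rw [← hAz', hA1, one_mul]

end Aux

/-- the restriction map from the ring of `N(v) × N'(w)`-doubly-invariant
`ℂ`-valued functions on `O_{v,w}` (with pointwise operations) to the ring of all
`ℂ`-valued functions on `N_{v,w}` is a ring isomorphism. -/
theorem stmt9 {G : Type*} [Group G] (Bm B Nm N : Subgroup G)
    (hNmBm : Nm ≤ Bm) (hNB : N ≤ B) (vdot wdot : G)
    (hBN : ∀ x : G, x ∈ Bm → x ∈ N → x = 1)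
    (hv : ∀ x ∈ N, vdot * x * vdot⁻¹ ∈ Bm → vdot * x * vdot⁻¹ ∈ Nm)
    (hfactv : ∀ x ∈ N, ∃ a ∈ NvSet N Nm vdot, ∃ b ∈ Nv'Set N vdot, x = a * b)
    (hdisjv : ∀ x : G, x ∈ NvSet N Nm vdot → x ∈ Nv'Set N vdot → x = 1)
    (hfactw : ∀ x ∈ N, ∃ a ∈ NvSet N Nm wdot⁻¹, ∃ b ∈ Nv'Set N wdot⁻¹, x = a * b)
    (hdisjw : ∀ x : G, x ∈ NvSet N Nm wdot⁻¹ → x ∈ Nv'Set N wdot⁻¹ → x = 1)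
    (hBruhat : {x : G | ∃ b₁ ∈ Bm, ∃ b₂ ∈ Bm, x = b₁ * wdot * b₂}
        ⊆ {x : G | ∃ b ∈ Bm, ∃ m, (m ∈ Nm ∧ wdot * m * wdot⁻¹ ∈ N) ∧ x = b * wdot * m}) :
    ∃ hsub : NvwSet N Bm vdot wdot ⊆ OSet N Bm vdot wdot,
      ∀ res : (↥(OSet N Bm vdot wdot) → ℂ) → (↥(NvwSet N Bm vdot wdot) → ℂ),
        (res = fun f y => f ⟨(y : G), hsub y.2⟩) →
        (∀ f g, res (f + g) = res f + res g) ∧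
        (∀ f g, res (f * g) = res f * res g) ∧
        Set.BijOn res
          {f : ↥(OSet N Bm vdot wdot) → ℂ |
            ∀ n₁ ∈ NvSet N Nm vdot, ∀ y : ↥(OSet N Bm vdot wdot), ∀ n₂ ∈ Nv'Set N wdot,
              ∀ h : n₁ * (y : G) * n₂ ∈ OSet N Bm vdot wdot,
                f ⟨n₁ * (y : G) * n₂, h⟩ = f y}
          Set.univ := by
  have hsub : NvwSet N Bm vdot wdot ⊆ OSet N Bm vdot wdot := Nvw_sub_O hBruhat
  refine ⟨hsub, ?_⟩
  intro res hres
  subst hres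
  -- choose the projection π
  have hdec : ∀ y : ↥(OSet N Bm vdot wdot), ∃ z : ↥(NvwSet N Bm vdot wdot),
      ∃ a ∈ NvSet N Nm vdot, ∃ c ∈ Nv'Set N wdot, (y : G) = a * (z : G) * c := by
    intro y
    obtain ⟨a, ha, z, hz, c, hc, h⟩ := exists_decomp hNmBm hfactv hfactw y.2
    exact ⟨⟨z, hz⟩, a, ha, c, hc, h⟩
  choose π aa haa cc hcc hπeq using hdec
  have huniq := fun {a a' z z' c c' : G} => unique_decomp (v := vdot) (w := wdot)
    hNmBm hBN hBruhat (a := a) (a' := a') (z := z) (z' := z') (c := c) (c' := c')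
  -- π is invariant
  have hπinv : ∀ n₁ ∈ NvSet N Nm vdot, ∀ y : ↥(OSet N Bm vdot wdot),
      ∀ n₂ ∈ Nv'Set N wdot, ∀ h : n₁ * (y : G) * n₂ ∈ OSet N Bm vdot wdot,
        π ⟨n₁ * (y : G) * n₂, h⟩ = π y := by
    intro n₁ hn₁ y n₂ hn₂ h
    set y' : ↥(OSet N Bm vdot wdot) := ⟨n₁ * (y : G) * n₂, h⟩ with hy'
    apply Subtype.ext
    refine huniq (haa y') (NvSet_mul hn₁ (haa y)) (π y').2 (π y).2 (hcc y')
      (Nv'Set_mul (hcc y) hn₂) ?_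
    have h1 : (y' : G) = n₁ * (y : G) * n₂ := rfl
    rw [← hπeq y', h1, hπeq y]; group
  -- π fixes N_{v,w}
  have hπfix : ∀ (z : G) (hz : z ∈ NvwSet N Bm vdot wdot),
      π ⟨z, hsub hz⟩ = ⟨z, hz⟩ := by
    intro z hz
    apply Subtype.ext
    refine huniq (haa ⟨z, hsub hz⟩) NvSet_one (π ⟨z, hsub hz⟩).2 hz
      (hcc ⟨z, hsub hz⟩) Nv'Set_one ?_
    rw [← hπeq ⟨z, hsub hz⟩]; group
  refine ⟨fun f g => rfl, fun f g => rfl, fun f _ => trivial, ?_, ?_⟩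
  · -- injectivity
    intro f hf g hg hfg
    funext y
    have hy' : aa y * ((π y : G)) * cc y ∈ OSet N Bm vdot wdot := (hπeq y) ▸ y.2
    have h3 : y = (⟨aa y * ((π y : G)) * cc y, hy'⟩ : ↥(OSet N Bm vdot wdot)) :=
      Subtype.ext (hπeq y)
    have hfv := hf (aa y) (haa y) ⟨(π y : G), hsub (π y).2⟩ (cc y) (hcc y) hy'
    have hgv := hg (aa y) (haa y) ⟨(π y : G), hsub (π y).2⟩ (cc y) (hcc y) hy'
    rw [h3, hfv, hgv]
    exact congrFun hfg (π y)
  · -- surjectivity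
    intro g _
    refine ⟨fun y => g (π y), ?_, ?_⟩
    · intro n₁ hn₁ y n₂ hn₂ h
      simp only
      rw [hπinv n₁ hn₁ y n₂ hn₂ h]
    · funext z
      simp only
      rw [hπfix (z : G) z.2]
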